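/- For every positive integer N divisible by d > 1, the probability that a uniform random permutation of [N] has all cycle lengths divisible by d equals (1/(N/d)!) · ∏_{r=0}^{N/d - 1} (r + 1/d). -/

import Mathlib

open Nat Function Finset
open Equiv

section helpers
variable {α β : Type*}

lemma perm_mem_periodicPts [Finite α] (σ : Perm α) (x : α) : x ∈ periodicPts σ := by
  refine ⟨orderOf σ, orderOf_pos σ, ?_⟩
  rw [IsPeriodicPt, IsFixedPt, Equiv.Perm.iterate_eq_pow, pow_orderOf_eq_one]
  rfl

lemma perm_mp_pos [Finite α] (σ : Perm α) (x : α) : 0 < minimalPeriod σ x :=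
  minimalPeriod_pos_of_mem_periodicPts (perm_mem_periodicPts σ x)

lemma sameCycle_nat [Finite α] {σ : Perm α} {x y : α} :
    σ.SameCycle x y ↔ ∃ k : ℕ, (σ ^ k) x = y := by
  constructor
  · intro h
    obtain ⟨i, _, hi⟩ := h.exists_pow_eq'
    exact ⟨i, hi⟩
  · rintro ⟨k, hk⟩
    exact ⟨(k : ℤ), by simpa using hk⟩

lemma sameCycle_mp_eq [Finite α] {σ : Perm α} {x y : α} (h : σ.SameCycle x y) :
    minimalPeriod σ x = minimalPeriod σ y := by
  obtain ⟨k, hk⟩ := sameCycle_nat.mp h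
  have := minimalPeriod_apply_iterate (perm_mem_periodicPts σ x) k
  rw [Equiv.Perm.iterate_eq_pow, hk] at this
  exact this.symm

lemma permCongr_pow_apply (π : α ≃ β) (σ : Perm α) (k : ℕ) (x : α) :
    ((π.permCongr σ) ^ k) (π x) = π ((σ ^ k) x) := by
  induction k generalizing x with
  | zero => simp
  | succ k ih =>
    rw [pow_succ, pow_succ, Perm.mul_apply, Perm.mul_apply, permCongr_apply,
      Equiv.symm_apply_apply, ih]

lemma mp_permCongr (π : α ≃ β) (σ : Perm α) (x : α) :
    minimalPeriod (π.permCongr σ) (π x) = minimalPeriod σ x := by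
  rw [minimalPeriod_eq_minimalPeriod_iff]
  intro n
  rw [IsPeriodicPt, IsPeriodicPt, IsFixedPt, IsFixedPt, Equiv.Perm.iterate_eq_pow,
    Equiv.Perm.iterate_eq_pow, permCongr_pow_apply]
  exact ⟨fun h => π.injective h, fun h => by rw [h]⟩

lemma sameCycle_permCongr [Finite α] [Finite β] (π : α ≃ β) (σ : Perm α) (x y : α) :
    (π.permCongr σ).SameCycle (π x) (π y) ↔ σ.SameCycle x y := by
  rw [sameCycle_nat, sameCycle_nat]
  constructor
  · rintro ⟨k, hk⟩
    rw [permCongr_pow_apply] at hk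
    exact ⟨k, π.injective hk⟩
  · rintro ⟨k, hk⟩
    exact ⟨k, by rw [permCongr_pow_apply, hk]⟩

end helpers

section structural
variable {n : ℕ}

local notation "φ" => Equiv.Perm.decomposeFin.symm

lemma iter_succ_aux (e : Perm (Fin n)) (p : Fin (n+1)) (x : Fin n) (k : ℕ)
    (h : ∀ j : ℕ, j < k → ((e ^ (j+1)) x).succ ≠ p) :
    ((φ (p, e)) ^ k) x.succ = ((e ^ k) x).succ := by
  induction k with
  | zero => simp
  | succ k ih =>
    rw [_root_.pow_succ', Perm.mul_apply, ih (fun j hj => h j (hj.trans (Nat.lt_succ_self k))),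
      Equiv.Perm.decomposeFin_symm_apply_succ,
      Equiv.swap_apply_of_ne_of_ne (Fin.succ_ne_zero _)
        (by rw [← Perm.mul_apply, ← _root_.pow_succ']; exact h k (Nat.lt_succ_self k)),
      ← Perm.mul_apply, ← _root_.pow_succ']

lemma pow_ne_self_of_lt_mp (e : Perm (Fin n)) (w : Fin n) {m : ℕ} (hm : 0 < m)
    (hlt : m < minimalPeriod e w) : (e ^ m) w ≠ w := by
  intro hc
  exact not_isPeriodicPt_of_pos_of_lt_minimalPeriod hm.ne' hlt
    (by rw [IsPeriodicPt, IsFixedPt, Equiv.Perm.iterate_eq_pow]; exact hc)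

lemma iter_zero_aux (e : Perm (Fin n)) (w : Fin n) (k : ℕ) (hk : k < minimalPeriod e w) :
    ((φ (w.succ, e)) ^ (k+1)) 0 = ((e ^ k) w).succ := by
  rw [pow_succ, Perm.mul_apply, Equiv.Perm.decomposeFin_symm_apply_zero,
    iter_succ_aux]
  intro j hj hc
  exact pow_ne_self_of_lt_mp e w (Nat.succ_pos j)
    (lt_of_le_of_lt (Nat.succ_le_of_lt hj) hk) (Fin.succ_injective _ hc)

lemma iterate_minimalPeriod' (e : Perm (Fin n)) (w : Fin n) :
    (e ^ (minimalPeriod e w)) w = w := by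
  have := iterate_minimalPeriod (f := ⇑e) (x := w)
  rwa [Equiv.Perm.iterate_eq_pow] at this

lemma iter_zero_period (e : Perm (Fin n)) (w : Fin n) :
    ((φ (w.succ, e)) ^ (minimalPeriod e w + 1)) 0 = 0 := by
  have hmp : 0 < minimalPeriod e w := perm_mp_pos e w
  obtain ⟨m, hm⟩ : ∃ m, minimalPeriod e w = m + 1 := ⟨_, (Nat.succ_pred_eq_of_pos hmp).symm⟩
  rw [hm, _root_.pow_succ', Perm.mul_apply, iter_zero_aux e w m (by omega),
    Equiv.Perm.decomposeFin_symm_apply_succ]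
  rw [← Perm.mul_apply, ← _root_.pow_succ', ← hm, iterate_minimalPeriod' e w,
    Equiv.swap_apply_right]

end structural


section structural2
variable {n : ℕ}

local notation "φ" => Equiv.Perm.decomposeFin.symm

lemma mp_zero_eq (e : Perm (Fin n)) (w : Fin n) :
    minimalPeriod (φ (w.succ, e)) 0 = minimalPeriod e w + 1 := by
  set σ := φ (w.succ, e) with hσ
  have hper : IsPeriodicPt σ (minimalPeriod e w + 1) 0 := by
    rw [IsPeriodicPt, IsFixedPt, Equiv.Perm.iterate_eq_pow]
    exact iter_zero_period e w
  have hpos : 0 < minimalPeriod e w + 1 := Nat.succ_pos _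
  have hle : minimalPeriod σ 0 ≤ minimalPeriod e w + 1 := hper.minimalPeriod_le hpos
  rcases Nat.lt_or_ge (minimalPeriod σ 0) (minimalPeriod e w + 1) with hlt | hge
  · exfalso
    have hpos' : 0 < minimalPeriod σ 0 := perm_mp_pos σ 0
    obtain ⟨k, hk⟩ : ∃ k, minimalPeriod σ 0 = k + 1 :=
      ⟨_, (Nat.succ_pred_eq_of_pos hpos').symm⟩
    have h1 : (σ ^ (k+1)) 0 = 0 := by
      have := isPeriodicPt_minimalPeriod σ (0 : Fin (n+1))
      rwa [IsPeriodicPt, IsFixedPt, Equiv.Perm.iterate_eq_pow, hk] at this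
    rw [iter_zero_aux e w k (by omega)] at h1
    exact Fin.succ_ne_zero _ h1
  · omega

lemma sc_zero_succ (e : Perm (Fin n)) (w x : Fin n) :
    (φ (w.succ, e)).SameCycle 0 x.succ ↔ e.SameCycle w x := by
  set σ := φ (w.succ, e) with hσ
  have hmp0 : minimalPeriod σ 0 = minimalPeriod e w + 1 := mp_zero_eq e w
  constructor
  · intro h
    obtain ⟨k, hk⟩ := sameCycle_nat.mp h
    have hmod : (σ ^ (k % (minimalPeriod e w + 1))) 0 = x.succ := by
      rw [← hk, ← Equiv.Perm.iterate_eq_pow, ← Equiv.Perm.iterate_eq_pow, ← hmp0,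
        iterate_mod_minimalPeriod_eq]
    rcases Nat.eq_zero_or_pos (k % (minimalPeriod e w + 1)) with h0 | h0
    · rw [h0] at hmod
      exact absurd hmod.symm (Fin.succ_ne_zero _)
    · obtain ⟨j, hj⟩ : ∃ j, k % (minimalPeriod e w + 1) = j + 1 :=
        ⟨_, (Nat.succ_pred_eq_of_pos h0).symm⟩
      have hjlt : j < minimalPeriod e w := by
        have := Nat.mod_lt k (y := minimalPeriod e w + 1) (Nat.succ_pos _)
        omega
      rw [hj, iter_zero_aux e w j hjlt] at hmod
      exact sameCycle_nat.mpr ⟨j, Fin.succ_injective _ hmod⟩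
  · intro h
    obtain ⟨k, hk⟩ := sameCycle_nat.mp h
    have hmod : (e ^ (k % minimalPeriod e w)) w = x := by
      rw [← hk, ← Equiv.Perm.iterate_eq_pow, ← Equiv.Perm.iterate_eq_pow,
        iterate_mod_minimalPeriod_eq]
    have hlt : k % minimalPeriod e w < minimalPeriod e w :=
      Nat.mod_lt k (perm_mp_pos e w)
    exact sameCycle_nat.mpr ⟨k % minimalPeriod e w + 1,
      by rw [iter_zero_aux e w _ hlt, hmod]⟩

lemma mp_succ_eq (e : Perm (Fin n)) (w x : Fin n) (hx : ¬ e.SameCycle w x) :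
    minimalPeriod (φ (w.succ, e)) x.succ = minimalPeriod e x := by
  have hne : ∀ j : ℕ, (e ^ j) x ≠ w := by
    intro j hc
    exact hx (sameCycle_nat.mpr ⟨j, hc⟩).symm
  have hit : ∀ k : ℕ, ((φ (w.succ, e)) ^ k) x.succ = ((e ^ k) x).succ := by
    intro k
    exact iter_succ_aux e w.succ x k (fun j _ hc => hne (j+1) (Fin.succ_injective _ hc))
  rw [minimalPeriod_eq_minimalPeriod_iff]
  intro m
  rw [IsPeriodicPt, IsPeriodicPt, IsFixedPt, IsFixedPt, Equiv.Perm.iterate_eq_pow,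
    Equiv.Perm.iterate_eq_pow, hit m]
  exact ⟨fun h => Fin.succ_injective _ h, fun h => by rw [h]⟩

lemma zero_iter (e : Perm (Fin n)) (x : Fin n) (k : ℕ) :
    ((φ ((0 : Fin (n+1)), e)) ^ k) x.succ = ((e ^ k) x).succ :=
  iter_succ_aux e 0 x k (fun j _ => Fin.succ_ne_zero _)

lemma zero_mp_zero (e : Perm (Fin n)) :
    minimalPeriod (φ ((0 : Fin (n+1)), e)) 0 = 1 :=
  minimalPeriod_eq_one_iff_isFixedPt.mpr
    (by rw [IsFixedPt]; exact Equiv.Perm.decomposeFin_symm_apply_zero _ _)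

lemma zero_mp_succ (e : Perm (Fin n)) (x : Fin n) :
    minimalPeriod (φ ((0 : Fin (n+1)), e)) x.succ = minimalPeriod e x := by
  rw [minimalPeriod_eq_minimalPeriod_iff]
  intro m
  rw [IsPeriodicPt, IsPeriodicPt, IsFixedPt, IsFixedPt, Equiv.Perm.iterate_eq_pow,
    Equiv.Perm.iterate_eq_pow, zero_iter]
  exact ⟨fun h => Fin.succ_injective _ h, fun h => by rw [h]⟩

lemma zero_not_sc (e : Perm (Fin n)) (x : Fin n) :
    ¬ (φ ((0 : Fin (n+1)), e)).SameCycle 0 x.succ := by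
  intro h
  obtain ⟨k, hk⟩ := sameCycle_nat.mp h
  have : ((φ ((0 : Fin (n+1)), e)) ^ k) 0 = 0 := by
    have h0 : (φ ((0 : Fin (n+1)), e)) 0 = 0 := Equiv.Perm.decomposeFin_symm_apply_zero _ _
    rw [← Equiv.Perm.iterate_eq_pow]
    exact iterate_fixed h0 k
  rw [this] at hk
  exact Fin.succ_ne_zero _ hk.symm

end structural2

section counting

def bcond (d r : ℕ) {α : Type*} (t : α) (σ : Perm α) : Prop :=
  minimalPeriod σ t % d = r ∧ ∀ x, σ.SameCycle t x ∨ d ∣ minimalPeriod σ x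

noncomputable def bCntP (d r : ℕ) (α : Type*) (t : α) : ℕ := Nat.card {σ : Perm α // bcond d r t σ}

noncomputable def aCnt (d n : ℕ) : ℕ :=
  Nat.card {σ : Perm (Fin n) // ∀ x, d ∣ minimalPeriod σ x}

noncomputable def bCnt (d r n : ℕ) : ℕ := bCntP d r (Fin (n+1)) 0

lemma bCntP_congr {α β : Type*} [Finite α] [Finite β] (d r : ℕ) (π : α ≃ β) (t : α) :
    bCntP d r α t = bCntP d r β (π t) := by
  refine Nat.card_congr (Equiv.subtypeEquiv π.permCongr (fun σ => ?_))
  unfold bcond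
  rw [mp_permCongr]
  refine and_congr Iff.rfl ⟨fun h y => ?_, fun h x => ?_⟩
  · obtain ⟨x, rfl⟩ := π.surjective y
    rcases h x with h1 | h1
    · exact Or.inl ((sameCycle_permCongr π σ t x).mpr h1)
    · exact Or.inr (by rwa [mp_permCongr])
  · rcases h (π x) with h1 | h1
    · exact Or.inl ((sameCycle_permCongr π σ t x).mp h1)
    · exact Or.inr (by rwa [mp_permCongr] at h1)

lemma nat_card_sigma {ι : Type*} [Fintype ι] (f : ι → Type*) [∀ i, Finite (f i)] :
    Nat.card ((i : ι) × f i) = ∑ i, Nat.card (f i) := by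
  classical
  letI : ∀ i, Fintype (f i) := fun i => Fintype.ofFinite _
  simp [Nat.card_eq_fintype_card, Fintype.card_sigma]

lemma aCnt_zero (d : ℕ) : aCnt d 0 = 1 := by
  unfold aCnt
  rw [Nat.card_eq_one_iff_unique]
  constructor
  · constructor
    rintro ⟨σ, -⟩ ⟨τ, -⟩
    simp [Subsingleton.elim σ τ]
  · exact ⟨⟨1, fun x => x.elim0⟩⟩

lemma bCnt_zero_n (d r : ℕ) (hd : 1 < d) : bCnt d r 0 = if r = 1 then 1 else 0 := by
  unfold bCnt bCntP
  have hcond : ∀ σ : Perm (Fin 1), bcond d r 0 σ ↔ r = 1 := by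
    intro σ
    have hσ : σ = 1 := by
      ext i
      rw [Fin.fin_one_eq_zero (σ i), Fin.fin_one_eq_zero ((1 : Perm (Fin (0+1))) i)]
    subst hσ
    unfold bcond
    have h1 : minimalPeriod (1 : Perm (Fin 1)) (0 : Fin 1) = 1 := by
      rw [minimalPeriod_eq_one_iff_isFixedPt]; rfl
    rw [h1, Nat.mod_eq_of_lt hd]
    simp only [eq_comm (a := r)]
    refine ⟨fun h => h.1, fun h => ⟨h, fun x => Or.inl ?_⟩⟩
    have : x = 0 := Fin.fin_one_eq_zero x
    subst this
    exact Equiv.Perm.SameCycle.refl _ _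
  split_ifs with h
  · rw [Nat.card_eq_one_iff_unique]
    refine ⟨⟨fun σ τ => ?_⟩, ⟨⟨1, (hcond 1).mpr h⟩⟩⟩
    ext i
    rw [Fin.fin_one_eq_zero (σ.1 i), Fin.fin_one_eq_zero (τ.1 i)]
  · have : IsEmpty {σ : Perm (Fin 1) // bcond d r 0 σ} := by
      refine ⟨fun σ => h ((hcond σ.1).mp σ.2)⟩
    simp [Nat.card_eq_zero]

lemma b0_eq_a (d n : ℕ) (hd : 0 < d) : bCnt d 0 n = aCnt d (n+1) := by
  unfold bCnt bCntP aCnt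
  refine Nat.card_congr (Equiv.subtypeEquiv (Equiv.refl _) (fun σ => ?_))
  simp only [Equiv.refl_apply]
  constructor
  · rintro ⟨h1, h2⟩ x
    rcases h2 x with h | h
    · rw [← sameCycle_mp_eq h]
      exact Nat.dvd_of_mod_eq_zero h1
    · exact h
  · intro h
    exact ⟨Nat.mod_eq_zero_of_dvd (h 0), fun x => Or.inr (h x)⟩


end counting

section recursion

local notation "φ" => Equiv.Perm.decomposeFin.symm

lemma mod_succ_shift {d r : ℕ} (hd : 1 < d) (hr : r < d) (k : ℕ) :
    (k+1) % d = r ↔ k % d = (r + (d-1)) % d := by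
  have h1 : (k+1) % d = (k % d + 1) % d := by
    conv_lhs => rw [Nat.add_mod, Nat.mod_eq_of_lt hd]
  have ha : k % d < d := Nat.mod_lt _ (by omega)
  have h2 : (r + (d-1)) % d = if r = 0 then d - 1 else r - 1 := by
    split_ifs with h
    · subst h; rw [Nat.zero_add, Nat.mod_eq_of_lt (by omega)]
    · have he : r + (d-1) = (r-1) + 1 * d := by omega
      rw [he, Nat.add_mul_mod_self_right, Nat.mod_eq_of_lt (by omega)]
  have h3 : (k % d + 1) % d = if k % d + 1 = d then 0 else k % d + 1 := by
    split_ifs with h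
    · rw [h, Nat.mod_self]
    · rw [Nat.mod_eq_of_lt (by omega)]
  rw [h1, h2, h3]
  split_ifs <;> omega

lemma cond_zero_case (d r : ℕ) (hd : 1 < d) {n : ℕ} (e : Perm (Fin (n+1))) :
    bcond d r 0 (φ ((0 : Fin (n+2)), e)) ↔ (r = 1 ∧ ∀ x, d ∣ minimalPeriod e x) := by
  unfold bcond
  rw [zero_mp_zero, Nat.mod_eq_of_lt hd]
  refine and_congr (by rw [eq_comm]) ⟨fun h x => ?_, fun h y => ?_⟩
  · rcases h x.succ with h1 | h1
    · exact absurd h1 (zero_not_sc e x)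
    · rwa [zero_mp_succ] at h1
  · refine Fin.cases ?_ (fun x => ?_) y
    · exact Or.inl (Equiv.Perm.SameCycle.refl _ _)
    · exact Or.inr (by rw [zero_mp_succ]; exact h x)

lemma cond_succ_case (d r : ℕ) (hd : 1 < d) (hr : r < d) {n : ℕ} (w : Fin (n+1))
    (e : Perm (Fin (n+1))) :
    bcond d r 0 (φ (w.succ, e)) ↔ bcond d ((r + (d-1)) % d) w e := by
  unfold bcond
  rw [mp_zero_eq, mod_succ_shift hd hr]
  refine and_congr Iff.rfl ⟨fun h x => ?_, fun h y => ?_⟩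
  · by_cases hsc : e.SameCycle w x
    · exact Or.inl hsc
    · rcases h x.succ with h1 | h1
      · exact absurd ((sc_zero_succ e w x).mp h1) hsc
      · exact Or.inr (by rwa [mp_succ_eq e w x hsc] at h1)
  · refine Fin.cases ?_ (fun x => ?_) y
    · exact Or.inl (Equiv.Perm.SameCycle.refl _ _)
    · by_cases hsc : e.SameCycle w x
      · exact Or.inl ((sc_zero_succ e w x).mpr hsc)
      · rcases h x with h1 | h1
        · exact absurd h1 hsc
        · exact Or.inr (by rwa [mp_succ_eq e w x hsc])

lemma rec_b (d r n : ℕ) (hd : 1 < d) (hr : r < d) :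
    bCnt d r (n+1)
      = (if r = 1 then aCnt d (n+1) else 0) + (n+1) * bCnt d ((r + (d-1)) % d) n := by
  classical
  have e1 : {σ : Perm (Fin (n+2)) // bcond d r 0 σ} ≃
      {pe : Fin (n+2) × Perm (Fin (n+1)) // bcond d r 0 (φ (pe.1, pe.2))} :=
    Equiv.subtypeEquiv Equiv.Perm.decomposeFin
      (fun σ => by rw [Prod.mk.eta, Equiv.symm_apply_apply])
  have e2 : {pe : Fin (n+2) × Perm (Fin (n+1)) // bcond d r 0 (φ (pe.1, pe.2))} ≃
      (p : Fin (n+2)) × {e : Perm (Fin (n+1)) // bcond d r 0 (φ (p, e))} :=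
    Equiv.subtypeProdEquivSigmaSubtype (fun p e => bcond d r 0 (φ (p, e)))
  have hcard : bCnt d r (n+1)
      = ∑ p : Fin (n+2), Nat.card {e : Perm (Fin (n+1)) // bcond d r 0 (φ (p, e))} := by
    rw [bCnt, bCntP, Nat.card_congr (e1.trans e2), nat_card_sigma]
  rw [hcard, Fin.sum_univ_succ]
  congr 1
  · by_cases h : r = 1
    · subst h
      simp only [if_pos rfl]
      rw [aCnt]
      refine Nat.card_congr (Equiv.subtypeEquiv (Equiv.refl _) (fun e => ?_))
      rw [Equiv.refl_apply, cond_zero_case d 1 hd]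
      simp
    · simp only [if_neg h]
      have : IsEmpty {e : Perm (Fin (n+1)) // bcond d r 0 (φ ((0 : Fin (n+2)), e))} := by
        refine ⟨fun ⟨e, he⟩ => h ((cond_zero_case d r hd e).mp he).1⟩
      simp [Nat.card_eq_zero]
  · have hterm : ∀ w : Fin (n+1),
        Nat.card {e : Perm (Fin (n+1)) // bcond d r 0 (φ (w.succ, e))}
          = bCnt d ((r + (d-1)) % d) n := by
      intro w
      have h1 : Nat.card {e : Perm (Fin (n+1)) // bcond d r 0 (φ (w.succ, e))}
          = bCntP d ((r + (d-1)) % d) (Fin (n+1)) w :=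
        Nat.card_congr (Equiv.subtypeEquiv (Equiv.refl _)
          (fun e => by rw [Equiv.refl_apply]; exact cond_succ_case d r hd hr w e))
      rw [h1, bCntP_congr d _ (Equiv.swap w 0) w, Equiv.swap_apply_left, bCnt]
    rw [Finset.sum_congr rfl (fun w _ => hterm w), Finset.sum_const, Finset.card_univ,
      Fintype.card_fin, smul_eq_mul]

end recursion

section derived

lemma b1_eq (d : ℕ) (hd : 1 < d) : ∀ n, bCnt d 1 n = (n+1) * aCnt d n := by
  intro n
  cases n with
  | zero => rw [bCnt_zero_n d 1 hd, if_pos rfl, aCnt_zero]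
  | succ n =>
    rw [rec_b d 1 n hd hd, if_pos rfl]
    have h1 : (1 + (d-1)) % d = 0 := by
      have : 1 + (d-1) = d := by omega
      rw [this, Nat.mod_self]
    rw [h1, b0_eq_a d n (by omega)]
    ring

lemma bchain (d : ℕ) (hd : 1 < d) : ∀ j n, 1 + j < d →
    bCnt d (1+j) (n+j) = (∏ i ∈ Finset.range j, (n+i+1)) * bCnt d 1 n := by
  intro j
  induction j with
  | zero => intro n _; simp
  | succ j ih =>
    intro n hj
    have hr : (1 + (j+1)) < d := hj
    have hstep : bCnt d (1+(j+1)) ((n+j)+1)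
        = (if 1+(j+1) = 1 then aCnt d ((n+j)+1) else 0)
          + ((n+j)+1) * bCnt d ((1+(j+1) + (d-1)) % d) (n+j) :=
      rec_b d (1+(j+1)) (n+j) hd hr
    have hif : (if 1+(j+1) = 1 then aCnt d ((n+j)+1) else 0) = 0 := by
      rw [if_neg (by omega)]
    have hmod : (1+(j+1) + (d-1)) % d = 1 + j := by
      have h1 : 1+(j+1) + (d-1) = (1+j) + 1 * d := by omega
      rw [h1, Nat.add_mul_mod_self_right, Nat.mod_eq_of_lt (by omega)]
    have hidx : n + (j+1) = (n+j)+1 := by omega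
    rw [hidx, hstep, hif, hmod, ih n (by omega), Finset.prod_range_succ]
    ring

lemma a_step (e K : ℕ) :
    aCnt (e+2) (K+(e+2))
      = (K+e+1) * ((∏ i ∈ Finset.range e, (K+i+1)) * ((K+1) * aCnt (e+2) K)) := by
  have hd : 1 < e + 2 := by omega
  have h1 : aCnt (e+2) (K+(e+2)) = bCnt (e+2) 0 ((K+e)+1) := by
    rw [b0_eq_a (e+2) ((K+e)+1) (by omega)]
    congr 1
  have hmod : (0 + (e+2-1)) % (e+2) = 1 + e := by
    have h : 0 + (e+2-1) = 1+e := by omega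
    rw [h, Nat.mod_eq_of_lt (by omega)]
  rw [h1, rec_b (e+2) 0 ((K+e)) hd (by omega), if_neg (by omega), hmod, Nat.zero_add,
    bchain (e+2) hd e K (by omega), b1_eq (e+2) hd K]

lemma fact_add (K : ℕ) : ∀ d, (K + d)! = K ! * ∏ i ∈ Finset.range d, (K+i+1) := by
  intro d
  induction d with
  | zero => simp
  | succ d ih =>
    rw [← Nat.add_assoc, Nat.factorial_succ, ih, Finset.prod_range_succ]
    ring

lemma main_ratio (e : ℕ) : ∀ m : ℕ,
    (aCnt (e+2) (m*(e+2)) : ℚ) / ((m*(e+2))! : ℚ)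
      = (1 / (m ! : ℚ)) * ∏ r ∈ Finset.range m, ((r : ℚ) + 1/(e+2)) := by
  intro m
  induction m with
  | zero => simp [aCnt_zero]
  | succ m ih =>
    set d := e + 2 with hd
    set K := m * d with hK
    have hidx : (m+1) * d = K + d := by rw [hK]; ring
    have hP : (0:ℚ) < (∏ i ∈ Finset.range e, (K+i+1) : ℕ) := by
      have : 0 < ∏ i ∈ Finset.range e, (K+i+1) := Finset.prod_pos (fun i _ => by omega)
      exact_mod_cast this
    have hkey : (aCnt d (K+d) : ℚ)
        = (K+e+1) * (((∏ i ∈ Finset.range e, (K+i+1) : ℕ) : ℚ) * ((K+1) * aCnt d K)) := by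
      have := a_step e K
      rw [hd]
      exact_mod_cast congrArg (Nat.cast (R := ℚ)) this
    have hfact : ((K+d)! : ℚ)
        = (K ! : ℚ) * ((∏ i ∈ Finset.range e, (K+i+1) : ℕ) : ℚ) * (K+e+1) * (K+e+2) := by
      have h2 : (K + d)! = K ! * ((∏ i ∈ Finset.range e, (K+i+1)) * (K+e+1) * (K+e+2)) := by
        rw [fact_add K d, hd, Finset.prod_range_succ, Finset.prod_range_succ]
        ring_nf
      rw [h2]
      push_cast
      ring
    have hfne : ((K)! : ℚ) ≠ 0 := by
      exact_mod_cast (Nat.factorial_pos K).ne'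
    have hKe1 : ((K:ℚ)+e+1) ≠ 0 := by positivity
    have hKe2 : ((K:ℚ)+e+2) ≠ 0 := by positivity
    have step1 : (aCnt d ((m+1)*d) : ℚ) / (((m+1)*d)! : ℚ)
        = ((aCnt d K : ℚ) / (K ! : ℚ)) * (((K:ℚ)+1)/((K:ℚ)+e+2)) := by
      rw [hidx, hkey, hfact]
      field_simp
    rw [step1, ih, Finset.prod_range_succ, Nat.factorial_succ]
    have hKcast : ((K : ℕ) : ℚ) = (m : ℚ) * ((e:ℚ)+2) := by
      rw [hK, hd]; push_cast; ring
    have hm1 : ((m:ℚ)+1) ≠ 0 := by positivity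
    have hfne2 : ((m)! : ℚ) ≠ 0 := by exact_mod_cast (Nat.factorial_pos m).ne'
    have he2 : ((e:ℚ)+2) ≠ 0 := by positivity
    rw [hKcast] at *
    push_cast
    generalize (∏ r ∈ range m, ((r : ℚ) + 1 / ((e : ℚ) + 2))) = P
    field_simp
    ring
end derived

/-- For `d > 1` and `d ∣ N`, the probability that a uniform random permutation of
`[N]` has all cycle lengths divisible by `d` equals
`(1/(N/d)!) · ∏_{r=0}^{N/d-1} (r + 1/d)`. -/
theorem prob_all_cycle_lengths_div (N d : ℕ) (hd : 1 < d) (hN : 0 < N) (hdvd : d ∣ N) :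
    (Nat.card {σ : Equiv.Perm (Fin N) //
        ∀ x : Fin N, d ∣ Function.minimalPeriod σ x} : ℚ) / (N ! : ℚ)
      = (1 / ((N / d)! : ℚ)) * ∏ r ∈ Finset.range (N / d), ((r : ℚ) + 1 / d) := by
  obtain ⟨e, rfl⟩ : ∃ e, d = e + 2 := ⟨d - 2, by omega⟩
  obtain ⟨m, rfl⟩ : ∃ m, N = m * (e + 2) := by
    obtain ⟨c, hc⟩ := hdvd
    exact ⟨c, by rw [hc]; ring⟩
  have hdiv : m * (e+2) / (e+2) = m := Nat.mul_div_cancel _ (by omega)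
  rw [hdiv]
  have h := main_ratio e m
  have hcast : ((e:ℚ) + 2) = ((e+2 : ℕ) : ℚ) := by push_cast; ring
  rw [hcast] at h
  exact h
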